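/- Let n ≥ 2, d ≥ 2, and let i₁, …, i_d ∈ {1, …, n} with i₁ ≠ i₂. Then the iterated ring commutator [X_{i₁}, X_{i₂}, …, X_{i_d}] is a nonzero element of the free associative ℤ-algebra ℤ⟨X₁, …, X_n⟩. -/

import Mathlib

/-- The ring commutator `[a,b] = a * b - b * a`. -/
def ringComm {R : Type*} [Ring R] (a b : R) : R := a * b - b * a

/-- `iterComm a [b₁, …, bₘ] = [a, b₁, …, bₘ]`, the left-normed iterated ring
commutator. -/
def iterComm {R : Type*} [Ring R] : R → List R → R
  | a, [] => a
  | a, b :: l => iterComm (ringComm a b) l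

/-- The iterated ring commutator `[a₁, …, a_d]` of a nonempty list. -/
def iterCommList {R : Type*} [Ring R] : List R → R
  | [] => 0
  | a :: l => iterComm a l

section IterCommAux

open MonoidAlgebra FreeMonoid

variable {n : ℕ}

variable {n : ℕ}

def valA (n : ℕ) (c : ℕ) : List (Fin n) → ℕ
  | [] => c
  | a :: l => valA n (c * (n+1) + (a.val + 1)) l

def wval (n : ℕ) (l : List (Fin n)) : ℕ := valA n 0 l

theorem valA_eq (c : ℕ) (l : List (Fin n)) :
    valA n c l = c * (n+1) ^ l.length + wval n l := by
  induction l generalizing c with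
  | nil => simp [valA, wval]
  | cons a t ih =>
    show valA n (c * (n+1) + (a.val+1)) t = _
    rw [ih]
    have : wval n (a :: t) = valA n (0 * (n+1) + (a.val+1)) t := rfl
    rw [this, ih, List.length_cons]
    ring

theorem wval_cons (a : Fin n) (l : List (Fin n)) :
    wval n (a :: l) = (a.val + 1) * (n+1) ^ l.length + wval n l := by
  have : wval n (a :: l) = valA n (0 * (n+1) + (a.val+1)) l := rfl
  rw [this, valA_eq]
  ring_nf

theorem wval_append (l : List (Fin n)) (a : Fin n) :
    wval n (l ++ [a]) = wval n l * (n+1) + (a.val + 1) := by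
  induction l with
  | nil => simp [wval, valA]
  | cons b t ih =>
    rw [List.cons_append, wval_cons, wval_cons, ih, List.length_append]
    simp only [List.length_singleton, pow_add, pow_one]
    ring

theorem wval_lt (l : List (Fin n)) : wval n l < (n+1) ^ l.length := by
  induction l with
  | nil => simp [wval, valA]
  | cons a t ih =>
    rw [wval_cons, List.length_cons, pow_succ]
    have ha : a.val + 1 + 1 ≤ n + 1 := by have := a.isLt; omega
    calc (a.val + 1) * (n+1) ^ t.length + wval n t
        < (a.val + 1) * (n+1) ^ t.length + (n+1) ^ t.length := by omega
      _ = (a.val + 1 + 1) * (n+1) ^ t.length := by ring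
      _ ≤ (n+1) * (n+1) ^ t.length := Nat.mul_le_mul_right _ ha
      _ = (n+1) ^ t.length * (n+1) := by ring

theorem wval_ge (l : List (Fin n)) (h : l ≠ []) : (n+1) ^ (l.length - 1) ≤ wval n l := by
  cases l with
  | nil => simp at h
  | cons a t =>
    rw [wval_cons]
    simp only [List.length_cons, Nat.add_sub_cancel]
    have : 1 * (n+1) ^ t.length ≤ (a.val + 1) * (n+1) ^ t.length :=
      Nat.mul_le_mul_right _ (by omega)
    omega

theorem length_le_of_wval_le {u v : List (Fin n)} (h : wval n u ≤ wval n v) :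
    u.length ≤ v.length := by
  by_contra hc
  push_neg at hc
  have hu : u ≠ [] := by intro e; subst e; simp at hc
  have h1 := wval_ge u hu
  have h2 := wval_lt v
  have : (n+1) ^ v.length ≤ (n+1) ^ (u.length - 1) :=
    Nat.pow_le_pow_right (by omega) (by omega)
  omega

theorem wval_append_le {u v : List (Fin n)} (j : Fin n) (h : wval n u ≤ wval n v) :
    wval n (u ++ [j]) ≤ wval n (v ++ [j]) := by
  rw [wval_append, wval_append]; nlinarith

theorem wval_cons_le {u v : List (Fin n)} (j : Fin n) (h : wval n u ≤ wval n v) :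
    wval n (j :: u) ≤ wval n (j :: v) := by
  rw [wval_cons, wval_cons]
  have h1 := length_le_of_wval_le h
  have h2 : (n+1) ^ u.length ≤ (n+1) ^ v.length := Nat.pow_le_pow_right (by omega) h1
  have := Nat.mul_le_mul_left (j.val + 1) h2
  omega

theorem wval_inj : ∀ u v : List (Fin n), wval n u = wval n v → u = v := by
  intro u
  induction u using List.reverseRecOn with
  | nil =>
    intro v h
    cases v using List.reverseRecOn with
    | nil => rfl
    | append_singleton t a =>
      exfalso
      rw [wval_append] at h
      simp only [wval, valA] at h
      omega
  | append_singleton t a ih =>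
    intro v h
    cases v using List.reverseRecOn with
    | nil =>
      exfalso
      rw [wval_append] at h
      simp only [wval, valA] at h
      omega
    | append_singleton s b =>
      rw [wval_append, wval_append] at h
      have ha : a.val + 1 < n + 1 := by have := a.isLt; omega
      have hb : b.val + 1 < n + 1 := by have := b.isLt; omega
      have m1 : (wval n t * (n+1) + (a.val+1)) % (n+1) = a.val+1 := by
        rw [mul_comm, Nat.mul_add_mod]; exact Nat.mod_eq_of_lt ha
      have m2 : (wval n s * (n+1) + (b.val+1)) % (n+1) = b.val+1 := by
        rw [mul_comm, Nat.mul_add_mod]; exact Nat.mod_eq_of_lt hb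
      have d1 : (wval n t * (n+1) + (a.val+1)) / (n+1) = wval n t := by
        rw [mul_comm, Nat.mul_add_div (by omega), Nat.div_eq_of_lt ha, Nat.add_zero]
      have d2 : (wval n s * (n+1) + (b.val+1)) / (n+1) = wval n s := by
        rw [mul_comm, Nat.mul_add_div (by omega), Nat.div_eq_of_lt hb, Nat.add_zero]
      have hab : a = b := Fin.ext (by rw [h] at m1; omega)
      have hts : t = s := ih s (by rw [h] at d1; omega)
      rw [hab, hts]

theorem all_eq_of_append_singleton : ∀ (l : List (Fin n)) (x : Fin n),
    l ++ [x] = x :: l → ∀ a ∈ l, a = x := by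
  intro l
  induction l with
  | nil => intro x _ a ha; simp at ha
  | cons b t ih =>
    intro x h a ha
    rw [List.cons_append] at h
    injection h with hb ht
    subst hb
    rcases List.mem_cons.mp ha with h1 | h2
    · exact h1
    · exact ih b ht a h2

noncomputable section

abbrev FA (n : ℕ) := MonoidAlgebra ℤ (FreeMonoid (Fin n))

def V (w : FreeMonoid (Fin n)) : ℕ := wval n w.toList

def Good (f : FA n) : Prop :=
  ∃ W : FreeMonoid (Fin n), f.coeff W ≠ 0 ∧ (∀ w, f.coeff w ≠ 0 → V w ≤ V W) ∧
    ∃ p ∈ W.toList, ∃ q ∈ W.toList, p ≠ q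

theorem good_step (f : FA n) (j : Fin n) (hf : Good f) :
    Good (ringComm f (MonoidAlgebra.single (of j) 1)) := by
  classical
  obtain ⟨W, hW, hmax, p, hp, q, hq, hpq⟩ := hf
  set X : FA n := MonoidAlgebra.single (of j) 1 with hX
  -- the two candidate top words
  have htl1 : (W * of j).toList = W.toList ++ [j] := by
    rw [toList_mul, toList_of]
  have htl2 : (of j * W).toList = j :: W.toList := by
    rw [toList_mul, toList_of]; rfl
  have hne : W * of j ≠ of j * W := by
    intro h
    have hl : W.toList ++ [j] = j :: W.toList := by
      rw [← htl1, ← htl2, h]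
    have hall := all_eq_of_append_singleton W.toList j hl
    exact hpq ((hall p hp).trans (hall q hq).symm)
  have hVne : V (W * of j) ≠ V (of j * W) := fun h =>
    hne (toList.injective (wval_inj _ _ (by simpa [V] using h)))
  -- extraction lemmas
  have hr : (f * X).coeff (W * of j) = f.coeff W := by
    rw [hX]
    rw [MonoidAlgebra.coeff_mul_single_eq_coeff_mul W (fun a _ => mul_left_inj _)]
    exact mul_one _
  have hl : (X * f).coeff (of j * W) = f.coeff W := by
    rw [hX]
    rw [MonoidAlgebra.coeff_single_mul_eq_mul_coeff W (fun a _ => mul_right_inj _)]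
    exact one_mul _
  have hrsupp : ∀ w : FreeMonoid (Fin n), (f * X).coeff w ≠ 0 → ∃ u, f.coeff u ≠ 0 ∧ w = u * of j := by
    intro w hw
    have := MonoidAlgebra.support_coeff_mul_single_subset f (1:ℤ) (of j)
        (Finsupp.mem_support_iff.mpr hw)
    obtain ⟨u, hu, rfl⟩ := Finset.mem_image.mp this
    exact ⟨u, Finsupp.mem_support_iff.mp hu, rfl⟩
  have hlsupp : ∀ w : FreeMonoid (Fin n), (X * f).coeff w ≠ 0 → ∃ u, f.coeff u ≠ 0 ∧ w = of j * u := by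
    intro w hw
    have := MonoidAlgebra.support_coeff_single_mul_subset f (1:ℤ) (of j)
        (Finsupp.mem_support_iff.mpr hw)
    obtain ⟨u, hu, rfl⟩ := Finset.mem_image.mp this
    exact ⟨u, Finsupp.mem_support_iff.mp hu, rfl⟩
  have hVr : ∀ u, f.coeff u ≠ 0 → V (u * of j) ≤ V (W * of j) := by
    intro u hu
    have : V u ≤ V W := hmax u hu
    simpa [V, toList_mul, toList_of] using wval_append_le j this
  have hVl : ∀ u, f.coeff u ≠ 0 → V (of j * u) ≤ V (of j * W) := by
    intro u hu
    have h1 : V u ≤ V W := hmax u hu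
    have := wval_cons_le j (u := u.toList) (v := W.toList) h1
    simpa [V, htl2, toList_mul, toList_of] using this
  rcases hVne.lt_or_gt with hcase | hcase
  · -- V (W * of j) < V (of j * W) : witness of j * W
    refine ⟨of j * W, ?_, ?_, p, ?_, q, ?_, hpq⟩
    · have hz : (f * X).coeff (of j * W) = 0 := by
        by_contra hcon
        obtain ⟨u, hu, hequ⟩ := hrsupp _ hcon
        have := hVr u hu
        rw [← hequ] at this
        omega
      show (f * X - X * f).coeff (of j * W) ≠ 0
      rw [MonoidAlgebra.coeff_sub, Finsupp.sub_apply, hz, hl, zero_sub, neg_ne_zero]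
      exact hW
    · intro w hw
      have hw' : (f * X).coeff w ≠ 0 ∨ (X * f).coeff w ≠ 0 := by
        by_contra hcon
        push_neg at hcon
        have : (f * X - X * f).coeff w = 0 := by
          rw [MonoidAlgebra.coeff_sub, Finsupp.sub_apply, hcon.1, hcon.2, sub_zero]
        exact hw this
      rcases hw' with h1 | h1
      · obtain ⟨u, hu, rfl⟩ := hrsupp _ h1
        exact le_trans (hVr u hu) (le_of_lt hcase)
      · obtain ⟨u, hu, rfl⟩ := hlsupp _ h1
        exact le_trans (hVl u hu) (hVl W hW |>.trans (le_refl _))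
    · rw [htl2]; exact List.mem_cons_of_mem _ hp
    · rw [htl2]; exact List.mem_cons_of_mem _ hq
  · -- V (of j * W) < V (W * of j) : witness W * of j
    refine ⟨W * of j, ?_, ?_, p, ?_, q, ?_, hpq⟩
    · have hz : (X * f).coeff (W * of j) = 0 := by
        by_contra hcon
        obtain ⟨u, hu, hequ⟩ := hlsupp _ hcon
        have := hVl u hu
        rw [← hequ] at this
        omega
      show (f * X - X * f).coeff (W * of j) ≠ 0
      rw [MonoidAlgebra.coeff_sub, Finsupp.sub_apply, hz, hr, sub_zero]
      exact hW
    · intro w hw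
      have hw' : (f * X).coeff w ≠ 0 ∨ (X * f).coeff w ≠ 0 := by
        by_contra hcon
        push_neg at hcon
        have : (f * X - X * f).coeff w = 0 := by
          rw [MonoidAlgebra.coeff_sub, Finsupp.sub_apply, hcon.1, hcon.2, sub_zero]
        exact hw this
      rcases hw' with h1 | h1
      · obtain ⟨u, hu, rfl⟩ := hrsupp _ h1
        exact hVr u hu
      · obtain ⟨u, hu, rfl⟩ := hlsupp _ h1
        exact le_trans (hVl u hu) (le_of_lt hcase)
    · rw [htl1]; exact List.mem_append_left _ hp
    · rw [htl1]; exact List.mem_append_left _ hq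

theorem good_base {i1 i2 : Fin n} (h : i1 ≠ i2) :
    Good (ringComm (MonoidAlgebra.single (of i1) (1:ℤ))
      (MonoidAlgebra.single (of i2) (1:ℤ))) := by
  classical
  set w12 : FreeMonoid (Fin n) := of i1 * of i2 with hw12
  set w21 : FreeMonoid (Fin n) := of i2 * of i1 with hw21
  have htl12 : w12.toList = [i1, i2] := rfl
  have htl21 : w21.toList = [i2, i1] := rfl
  have hne : w12 ≠ w21 := by
    intro he
    have : ([i1, i2] : List (Fin n)) = [i2, i1] := by rw [← htl12, ← htl21, he]
    exact h (List.cons.inj this).1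
  have hg : ringComm (MonoidAlgebra.single (of i1) (1:ℤ)) (MonoidAlgebra.single (of i2) 1)
      = MonoidAlgebra.single w12 1 - MonoidAlgebra.single w21 1 := by
    rw [ringComm, MonoidAlgebra.single_mul_single, MonoidAlgebra.single_mul_single,
      one_mul]
  have hsupp : ∀ w : FreeMonoid (Fin n),
      ((MonoidAlgebra.single w12 (1:ℤ) - MonoidAlgebra.single w21 1 : FA n)).coeff w ≠ 0 →
      w = w12 ∨ w = w21 := by
    intro w hw
    by_contra hc
    push_neg at hc
    have : ((MonoidAlgebra.single w12 (1:ℤ) - MonoidAlgebra.single w21 1 : FA n)).coeff w = 0 := by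
      rw [MonoidAlgebra.coeff_sub, Finsupp.sub_apply, MonoidAlgebra.coeff_single,
        MonoidAlgebra.coeff_single, Finsupp.single_eq_of_ne' (Ne.symm hc.1),
        Finsupp.single_eq_of_ne' (Ne.symm hc.2), sub_zero]
    exact hw this
  have hVne : V w12 ≠ V w21 := fun he =>
    hne (toList.injective (wval_inj _ _ (by simpa [V] using he)))
  rw [hg]
  rcases hVne.lt_or_gt with hcase | hcase
  · refine ⟨w21, ?_, ?_, i2, ?_, i1, ?_, Ne.symm h⟩
    · rw [MonoidAlgebra.coeff_sub, Finsupp.sub_apply, MonoidAlgebra.coeff_single,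
        MonoidAlgebra.coeff_single, Finsupp.single_eq_of_ne' hne, Finsupp.single_eq_same,
        zero_sub, neg_ne_zero]
      exact one_ne_zero
    · intro w hw
      rcases hsupp w hw with rfl | rfl
      · exact le_of_lt hcase
      · exact le_refl _
    · rw [htl21]; exact List.mem_cons_self
    · rw [htl21]; exact List.mem_cons_of_mem _ List.mem_cons_self
  · refine ⟨w12, ?_, ?_, i1, ?_, i2, ?_, h⟩
    · rw [MonoidAlgebra.coeff_sub, Finsupp.sub_apply, MonoidAlgebra.coeff_single,
        MonoidAlgebra.coeff_single, Finsupp.single_eq_same,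
        Finsupp.single_eq_of_ne' (Ne.symm hne), sub_zero]
      exact one_ne_zero
    · intro w hw
      rcases hsupp w hw with rfl | rfl
      · exact le_refl _
      · exact le_of_lt hcase
    · rw [htl12]; exact List.mem_cons_self
    · rw [htl12]; exact List.mem_cons_of_mem _ List.mem_cons_self

theorem good_iter (js : List (Fin n)) (f : FA n) (hf : Good f) :
    Good (iterComm f (js.map fun j => MonoidAlgebra.single (of j) (1:ℤ))) := by
  induction js generalizing f with
  | nil => exact hf
  | cons j t ih => exact ih _ (good_step f j hf)

theorem good_ne_zero {f : FA n} (hf : Good f) : f ≠ 0 := by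
  obtain ⟨W, hW, -⟩ := hf
  intro h
  rw [h] at hW
  exact hW rfl

theorem map_iterComm {R S F : Type*} [Ring R] [Ring S] [FunLike F R S]
    [RingHomClass F R S] (φ : F) (a : R) (l : List R) :
    φ (iterComm a l) = iterComm (φ a) (l.map φ) := by
  induction l generalizing a with
  | nil => rfl
  | cons b t ih =>
    show φ (iterComm (ringComm a b) t) = iterComm (ringComm (φ a) (φ b)) (t.map φ)
    rw [ih]
    congr 1
    rw [ringComm, ringComm, map_sub, map_mul, map_mul]


end

end IterCommAux

open FreeMonoid in
/-- For `n ≥ 2`, `d ≥ 2` and indices `i₁, …, i_d` with `i₁ ≠ i₂`, the iterated ring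
commutator `[X_{i₁}, X_{i₂}, …, X_{i_d}]` is a nonzero element of the free associative
`ℤ`-algebra on `n` noncommuting variables. -/
theorem iterCommList_ne_zero (n d : ℕ) (hn : 2 ≤ n) (hd : 2 ≤ d)
    (idx : Fin d → Fin n)
    (h12 : idx ⟨0, by omega⟩ ≠ idx ⟨1, by omega⟩) :
    iterCommList (List.ofFn fun t => FreeAlgebra.ι ℤ (idx t)) ≠ 0 := by
  obtain ⟨d', rfl⟩ : ∃ d', d = d' + 2 := ⟨d - 2, by omega⟩
  set e := (FreeAlgebra.equivMonoidAlgebraFreeMonoid :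
    FreeAlgebra ℤ (Fin n) ≃ₐ[ℤ] MonoidAlgebra ℤ (FreeMonoid (Fin n))) with he
  have hι : ∀ x : Fin n, e (FreeAlgebra.ι ℤ x) = MonoidAlgebra.single (of x) 1 := by
    intro x
    rw [he]
    simp [FreeAlgebra.equivMonoidAlgebraFreeMonoid]
  rw [List.ofFn_succ, List.ofFn_succ]
  show iterComm (FreeAlgebra.ι ℤ (idx 0)) _ ≠ 0
  intro hzero
  have happ := congrArg e hzero
  rw [map_iterComm, map_zero, List.map_cons, List.map_ofFn] at happ
  rw [hι, hι] at happ
  have hmap : List.ofFn (⇑e ∘ fun i : Fin d' => FreeAlgebra.ι ℤ (idx i.succ.succ))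
      = (List.ofFn fun t : Fin d' => idx t.succ.succ).map
          fun j => MonoidAlgebra.single (of j) (1:ℤ) := by
    rw [List.map_ofFn]
    exact congrArg List.ofFn (funext fun t => hι _)
  rw [hmap] at happ
  have h0 : (0 : Fin (d' + 2)) = ⟨0, by omega⟩ := rfl
  have h1 : ((0 : Fin (d' + 1)).succ : Fin (d' + 2)) = ⟨1, by omega⟩ := rfl
  have hb : idx (0 : Fin (d' + 2)) ≠ idx ((0 : Fin (d' + 1)).succ) := by
    rw [h0, h1]; exact h12
  have hgood := good_iter (List.ofFn fun t : Fin d' => idx t.succ.succ) _ (good_base hb)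
  exact good_ne_zero hgood happ
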